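/- Let f : ℝ → ℝ be three times differentiable at l with f(l) = l and f'(l) ≠ 1. Set α = f'(l)/(1 - f'(l)), β = -f''(l)/(2·(1 - f'(l))³), and γ = (f'''(l)·(1 - f'(l)) + 3·f''(l)²)/(6·(1 - f'(l))⁵). Define T(x) = f(x) + α·(f(x) - x) + β·(f(x) - x)² + γ·(f(x) - x)³. Then T(l) = l, T'(l) = 0, T''(l) = 0, and T'''(l) = 0. -/

import Mathlib

theorem stmt_10 (f : ℝ → ℝ) (l : ℝ)
    (hf : ∀ᶠ x in nhds l, DifferentiableAt ℝ f x)
    (hf2 : ∀ᶠ x in nhds l, DifferentiableAt ℝ (deriv f) x)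
    (hf3 : DifferentiableAt ℝ (deriv (deriv f)) l)
    (hfl : f l = l) (hf' : deriv f l ≠ 1) :
    let α := deriv f l / (1 - deriv f l)
    let β := -iteratedDeriv 2 f l / (2 * (1 - deriv f l) ^ 3)
    let γ := (iteratedDeriv 3 f l * (1 - deriv f l) + 3 * (iteratedDeriv 2 f l) ^ 2)
      / (6 * (1 - deriv f l) ^ 5)
    let T : ℝ → ℝ := fun x =>
      f x + α * (f x - x) + β * (f x - x) ^ 2 + γ * (f x - x) ^ 3
    T l = l ∧ deriv T l = 0 ∧ iteratedDeriv 2 T l = 0 ∧ iteratedDeriv 3 T l = 0 := by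
  intro α β γ T
  have ha : (1 : ℝ) - deriv f l ≠ 0 := sub_ne_zero.mpr (Ne.symm hf')
  have hα : α = deriv f l / (1 - deriv f l) := rfl
  have hβ : β = -(deriv (deriv f) l) / (2 * (1 - deriv f l) ^ 3) := by
    show -iteratedDeriv 2 f l / (2 * (1 - deriv f l) ^ 3) = _
    simp [iteratedDeriv_succ, iteratedDeriv_one]
  have hγ : γ = (deriv (deriv (deriv f)) l * (1 - deriv f l)
      + 3 * (deriv (deriv f) l) ^ 2) / (6 * (1 - deriv f l) ^ 5) := by
    show (iteratedDeriv 3 f l * (1 - deriv f l) + 3 * (iteratedDeriv 2 f l) ^ 2)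
      / (6 * (1 - deriv f l) ^ 5) = _
    simp [iteratedDeriv_succ, iteratedDeriv_one]
  set D1 : ℝ → ℝ := fun x => deriv f x + α * (deriv f x - 1)
      + β * (2 * (f x - x) * (deriv f x - 1)) + γ * (3 * (f x - x) ^ 2 * (deriv f x - 1))
    with hD1def
  set D2 : ℝ → ℝ := fun x => deriv (deriv f) x + α * deriv (deriv f) x
      + β * (2 * ((deriv f x - 1) ^ 2 + (f x - x) * deriv (deriv f) x))
      + γ * (3 * (2 * (f x - x) * (deriv f x - 1) ^ 2 + (f x - x) ^ 2 * deriv (deriv f) x))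
    with hD2def
  have key1 : ∀ x, DifferentiableAt ℝ f x → HasDerivAt T (D1 x) x := by
    intro x hx
    have hd := hx.hasDerivAt
    have hg : HasDerivAt (fun y => f y - y) (deriv f x - 1) x := hd.sub (hasDerivAt_id x)
    have H := ((hd.add (hg.const_mul α)).add ((hg.pow 2).const_mul β)).add
      ((hg.pow 3).const_mul γ)
    refine H.congr_deriv ?_
    push_cast
    ring
  have key2 : ∀ x, DifferentiableAt ℝ f x → DifferentiableAt ℝ (deriv f) x →
      HasDerivAt D1 (D2 x) x := by
    intro x hx hx2
    have hd := hx.hasDerivAt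
    have hb := hx2.hasDerivAt
    have hg : HasDerivAt (fun y => f y - y) (deriv f x - 1) x := hd.sub (hasDerivAt_id x)
    have hg' : HasDerivAt (fun y => deriv f y - 1) (deriv (deriv f) x) x := hb.sub_const 1
    have H := ((hb.add (hg'.const_mul α)).add
      ((((hg.const_mul 2).mul hg').const_mul β))).add
      (((((hg.pow 2).const_mul 3).mul hg').const_mul γ))
    refine H.congr_deriv ?_
    push_cast
    simp only [hD2def, Pi.pow_apply]
    ring
  have e1 : deriv T =ᶠ[nhds l] D1 := by
    filter_upwards [hf] with x hx
    exact (key1 x hx).deriv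
  have e2 : deriv D1 =ᶠ[nhds l] D2 := by
    filter_upwards [hf, hf2] with x hx hx2
    exact (key2 x hx hx2).deriv
  refine ⟨by simp [T, hfl], ?_, ?_, ?_⟩
  · rw [(key1 l hf.self_of_nhds).deriv]
    simp only [hD1def, hfl, sub_self, hα]
    field_simp
    ring
  · rw [iteratedDeriv_succ, iteratedDeriv_one, e1.deriv_eq,
      (key2 l hf.self_of_nhds hf2.self_of_nhds).deriv]
    simp only [hD2def, hfl, sub_self, hα, hβ, hγ]
    field_simp
    ring
  · have hd := hf.self_of_nhds.hasDerivAt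
    have hb := hf2.self_of_nhds.hasDerivAt
    have hc := hf3.hasDerivAt
    have hg : HasDerivAt (fun y => f y - y) (deriv f l - 1) l := hd.sub (hasDerivAt_id l)
    have hg' : HasDerivAt (fun y => deriv f y - 1) (deriv (deriv f) l) l := hb.sub_const 1
    have H := ((hc.add (hc.const_mul α)).add
      ((((hg'.pow 2).add (hg.mul hc)).const_mul 2).const_mul β)).add
      (((((hg.const_mul 2).mul (hg'.pow 2)).add ((hg.pow 2).mul hc)).const_mul 3).const_mul γ)
    have key3 : HasDerivAt D2 (deriv (deriv (deriv f)) l + α * deriv (deriv (deriv f)) l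
        + β * (2 * ((2:ℝ) * (deriv f l - 1) ^ 1 * deriv (deriv f) l
          + ((deriv f l - 1) * deriv (deriv f) l + (f l - l) * deriv (deriv (deriv f)) l)))
        + γ * (3 * ((2 * (deriv f l - 1) * (deriv f l - 1) ^ 2
            + 2 * (f l - l) * ((2:ℝ) * (deriv f l - 1) ^ 1 * deriv (deriv f) l))
          + (((2:ℝ) * (f l - l) ^ 1 * (deriv f l - 1)) * deriv (deriv f) l
            + (f l - l) ^ 2 * deriv (deriv (deriv f)) l)))) l := by
      exact H
    have e3 : deriv (deriv T) =ᶠ[nhds l] D2 := e1.deriv.trans e2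
    rw [iteratedDeriv_succ, iteratedDeriv_succ, iteratedDeriv_one, e3.deriv_eq, key3.deriv]
    simp only [hfl, sub_self, hα, hβ, hγ]
    field_simp
    ring
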